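/- The optimal full-merge utility and the optimal partial pair-encoding utility are within a constant factor: for every string s and every k, OPT(s,k) ≤ 3 · OPT^m(s,k). -/

import Mathlib

variable {α : Type*} [DecidableEq α]

/-- Full greedy left-to-right replacement of the pair `ab` by `c`. -/
def replace (a b c : α) : List α → List α
  | [] => []
  | [x] => [x]
  | x :: y :: rest =>
    if x = a ∧ y = b then c :: replace a b c rest
    else x :: replace a b c (y :: rest)

/-- Replacement of every occurrence of the symbol `c` by the pair `ab`. -/
def expand (a b c : α) : List α → List α
  | [] => []
  | x :: rest => if x = c then a :: b :: expand a b c rest else x :: expand a b c rest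

/-- `t` is obtained from `s` by one partial replacement rule (replacing some
non-overlapping occurrences of a pair `ab` by a symbol `c`, invertibly). -/
def PartialStep (s t : List α) : Prop := ∃ a b c : α, expand a b c t = s

/-- `t` is obtained from `s` by one full merge of a pair `ab` into a fresh symbol `c`. -/
def FullStep (s t : List α) : Prop := ∃ a b c : α, c ∉ s ∧ t = replace a b c s

/-- A greedy (BPE) step: a full merge minimizing the resulting length. -/
def GreedyStep (s t : List α) : Prop :=
  FullStep s t ∧ ∀ u : List α, FullStep s u → t.length ≤ u.length

/-- `t` is obtained from `s` by a partial merge sequence of length `k`. -/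
def PartialReach : ℕ → List α → List α → Prop
  | 0, s, t => t = s
  | k+1, s, t => ∃ u, PartialStep s u ∧ PartialReach k u t

/-- `t` is obtained from `s` by a full merge sequence of length `k`. -/
def FullReach : ℕ → List α → List α → Prop
  | 0, s, t => t = s
  | k+1, s, t => ∃ u, FullStep s u ∧ FullReach k u t

/-- `t` is obtained from `s` by a run of BPE with `k` greedy merge rounds. -/
def GreedyReach : ℕ → List α → List α → Prop
  | 0, s, t => t = s
  | k+1, s, t => ∃ u, GreedyStep s u ∧ GreedyReach k u t

/-- Optimal utility of partial merge sequences of length `k` (the OPE optimum). -/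
noncomputable def OPT (s : List α) (k : ℕ) : ℕ :=
  sSup {u : ℕ | ∃ t : List α, PartialReach k s t ∧ u = s.length - t.length}

/-- Optimal utility of full merge sequences of length `k` (the OMS optimum). -/
noncomputable def OPTm (s : List α) (k : ℕ) : ℕ :=
  sSup {u : ℕ | ∃ t : List α, FullReach k s t ∧ u = s.length - t.length}

/-- A pair packing: non-overlapping indices at which a common pair occurs in `s`
(0-based indices). -/
def IsPairPacking (s : List α) (P : Finset ℕ) : Prop :=
  (∀ i ∈ P, i + 1 < s.length) ∧
  (∀ i ∈ P, ∀ j ∈ P, i ≠ j → 2 ≤ Nat.dist i j) ∧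
  ∃ a b : α, ∀ i ∈ P, s[i]? = some a ∧ s[i+1]? = some b

/-- A `k`-packing: a disjoint union of `k` pair packings. -/
def IsKPacking (s : List α) (k : ℕ) (P : Fin k → Finset ℕ) : Prop :=
  (∀ i, IsPairPacking s (P i)) ∧ ∀ i j, i ≠ j → Disjoint (P i) (P j)

/-- `Pk s k`: maximum size of a `k`-packing of `s`. -/
noncomputable def Pk (s : List α) (k : ℕ) : ℕ :=
  sSup {n : ℕ | ∃ P : Fin k → Finset ℕ, IsKPacking s k P ∧ n = ∑ i, (P i).card}

/-- Number of (possibly overlapping) occurrences of the pair `ab` in `s`. -/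
def freq (s : List α) (a b : α) : ℕ :=
  ((Finset.range s.length).filter (fun i => s[i]? = some a ∧ s[i+1]? = some b)).card

/-- `Fk s k`: total number of occurrences of the `k` most frequent pairs in `s`. -/
noncomputable def Fk (s : List α) (k : ℕ) : ℕ :=
  sSup {n : ℕ | ∃ Q : Finset (α × α), Q.card ≤ k ∧ n = ∑ p ∈ Q, freq s p.1 p.2}

@[simp] lemma expand_nil (a b c : α) : expand a b c [] = [] := rfl
lemma expand_cons (a b c x : α) (l : List α) :
    expand a b c (x :: l) = if x = c then a :: b :: expand a b c l else x :: expand a b c l := rfl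

lemma expand_append (a b c : α) (l₁ l₂ : List α) :
    expand a b c (l₁ ++ l₂) = expand a b c l₁ ++ expand a b c l₂ := by
  induction l₁ with
  | nil => simp
  | cons x l ih => by_cases hx : x = c <;> simp [expand_cons, hx, ih]

lemma expand_length (a b c : α) (l : List α) :
    (expand a b c l).length = l.length + l.count c := by
  induction l with
  | nil => simp
  | cons x l ih =>
    by_cases hx : x = c <;> simp [expand_cons, hx, ih, List.count_cons] <;> omega

lemma expand_replace (a b c : α) (s : List α) (h : c ∉ s) :
    expand a b c (replace a b c s) = s := by
  induction s using replace.induct a b with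
  | case1 => simp [replace, expand]
  | case2 x =>
    simp only [replace, expand_cons]
    have : x ≠ c := by rintro rfl; simp at h
    simp [this]
  | case3 x y rest hxy ih =>
    obtain ⟨rfl, rfl⟩ := hxy
    have hc : c ∉ rest := fun hc => h (by simp [hc])
    simp [replace, expand_cons, ih hc]
  | case4 x y rest hxy ih =>
    have hx : x ≠ c := by rintro rfl; simp at h
    have hc : c ∉ y :: rest := fun hc => h (by simp at hc ⊢; tauto)
    simp [replace, hxy, expand_cons, hx, ih hc]

lemma replace_self (b c : α) (s : List α) (h : c ∉ s) : replace c b c s = s := by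
  induction s using replace.induct c b with
  | case1 => rfl
  | case2 x => rfl
  | case3 x y rest hxy ih => exact absurd hxy.1.symm (by rintro rfl; simp at h)
  | case4 x y rest hxy ih =>
    have : c ∉ y :: rest := fun hc => h (by simp at hc ⊢; tauto)
    simp [replace, hxy, ih this]


lemma replace_head (a b c y : α) (rest : List α) :
    (replace a b c (y :: rest))[0]? = some y ∨
      (∃ z r, rest = z :: r ∧ y = a ∧ z = b ∧ (replace a b c (y :: rest))[0]? = some c) := by
  match rest with
  | [] => left; rfl
  | z :: r =>
    by_cases h : y = a ∧ z = b
    · right; exact ⟨z, r, rfl, h.1, h.2, by rw [replace, if_pos h]; simp⟩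
    · left; rw [replace, if_neg h]; simp

lemma replace_noOcc (a b c : α) (s : List α) (h : c ∉ s) (j : ℕ) :
    ¬((replace a b c s)[j]? = some a ∧ (replace a b c s)[j+1]? = some b) := by
  induction s using replace.induct a b generalizing j with
  | case1 => simp [replace]
  | case2 x => rintro ⟨h1, h2⟩; simp [replace] at h2
  | case3 x y rest hxy ih =>
    obtain ⟨rfl, rfl⟩ := hxy
    have hc : c ∉ rest := fun hc => h (by simp [hc])
    match j with
    | 0 =>
      rintro ⟨h1, -⟩
      simp [replace] at h1
      exact h (by simp [h1])
    | j+1 =>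
      simp only [replace]
      simpa using ih hc j
  | case4 x y rest hxy ih =>
    have hc : c ∉ y :: rest := fun hc => h (by simp at hc ⊢; tauto)
    rw [replace, if_neg hxy]
    match j with
    | 0 =>
      rintro ⟨h1, h2⟩
      have hxa : x = a := by simpa using h1
      rw [List.getElem?_cons_succ] at h2
      rcases replace_head a b c y rest with h0 | ⟨z, r, hr, hy, hz, h0⟩
      · rw [h0] at h2
        exact hxy ⟨hxa, by simpa using h2⟩
      · rw [h0] at h2
        have hcb : c = b := by simpa using h2
        exact h (by subst hr; simp [hcb, hz])
    | j+1 =>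
      rw [List.getElem?_cons_succ, List.getElem?_cons_succ]
      exact ih hc j

/-- Start position in `expand a b c u` of the block corresponding to position `j` of `u`. -/
def epos (c : α) (u : List α) (j : ℕ) : ℕ := j + ((u.take j).count c)

@[simp] lemma epos_zero (c : α) (u : List α) : epos c u 0 = 0 := by simp [epos]

lemma epos_succ (c : α) (u : List α) (j : ℕ) :
    epos c u (j+1) = epos c u j + (if u[j]? = some c then 2 else 1) := by
  simp only [epos, List.take_succ, List.count_append]
  rcases h : u[j]? with - | x
  · simp [h]; omega
  · by_cases hx : x = c <;> simp [h, hx, List.count_cons] <;> omega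

lemma epos_strictMono (c : α) (u : List α) : StrictMono (epos c u) := by
  apply strictMono_nat_of_lt_succ
  intro n
  rw [epos_succ]
  split <;> omega

lemma epos_count_mono (c : α) (u : List α) {j₁ j₂ : ℕ} (h : j₁ ≤ j₂) :
    ((u.take j₁).count c) ≤ ((u.take j₂).count c) := by
  have : u.take j₁ = (u.take j₂).take j₁ := by rw [List.take_take, min_eq_left h]
  rw [this]
  exact ((u.take j₂).take_sublist j₁).count_le c

lemma epos_add_le (c : α) (u : List α) {j₁ j₂ : ℕ} (h : j₁ ≤ j₂) :
    epos c u j₁ + (j₂ - j₁) ≤ epos c u j₂ := by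
  have := epos_count_mono c u h
  simp only [epos]
  omega

lemma epos_len (a b c : α) (u : List α) :
    epos c u u.length = (expand a b c u).length := by
  simp [epos, expand_length]

lemma epos_lt_len (a b c : α) (u : List α) {j : ℕ} (hj : j < u.length) :
    epos c u j < (expand a b c u).length := by
  rw [← epos_len a b c u]
  exact epos_strictMono c u hj

lemma take_append_drop_expand (a b c : α) (u : List α) (j : ℕ) (hj : j ≤ u.length) :
    expand a b c u = expand a b c (u.take j) ++ expand a b c (u.drop j)
      ∧ (expand a b c (u.take j)).length = epos c u j := by
  constructor
  · rw [← expand_append, List.take_append_drop]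
  · rw [expand_length, epos, List.length_take, min_eq_left hj]

lemma epos_getElem (a b c : α) (u : List α) {j : ℕ} (hj : j < u.length) :
    (expand a b c u)[epos c u j]? = some (if u[j]? = some c then a else u[j]) := by
  obtain ⟨h1, h2⟩ := take_append_drop_expand a b c u j hj.le
  rw [h1, List.getElem?_append_right (by omega), h2, Nat.sub_self]
  have hd : u.drop j = u[j] :: u.drop (j+1) := List.drop_eq_getElem_cons hj
  rw [hd, expand_cons]
  by_cases hc : u[j] = c
  · simp [hc, List.getElem?_eq_getElem hj]
  · have : ¬(u[j]? = some c) := by simp [List.getElem?_eq_getElem hj, hc]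
    simp [hc, this]

lemma epos_getElem_two (a b c : α) (u : List α) {j : ℕ} (hj : j < u.length)
    (hc : u[j]? = some c) :
    (expand a b c u)[epos c u j + 1]? = some b := by
  obtain ⟨h1, h2⟩ := take_append_drop_expand a b c u j hj.le
  rw [h1, List.getElem?_append_right (by omega), h2]
  have hd : u.drop j = u[j] :: u.drop (j+1) := List.drop_eq_getElem_cons hj
  have hc' : u[j] = c := by simpa [List.getElem?_eq_getElem hj] using hc
  rw [hd, expand_cons, if_pos hc']
  simp [Nat.add_sub_cancel_left]

lemma epos_cover (a b c : α) (u : List α) {p : ℕ} (hp : p < (expand a b c u).length) :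
    ∃ j, j < u.length ∧ (p = epos c u j ∨ (u[j]? = some c ∧ p = epos c u j + 1)) := by
  classical
  set j := Nat.findGreatest (fun j => epos c u j ≤ p) u.length with hj
  have h0 : epos c u 0 ≤ p := by simp
  have hle : epos c u j ≤ p := Nat.findGreatest_spec (P := fun j => epos c u j ≤ p) (Nat.zero_le u.length) h0
  have hjlen : j ≤ u.length := Nat.findGreatest_le _
  have hjlt : j < u.length := by
    rcases eq_or_lt_of_le hjlen with h | h
    · exfalso
      rw [← epos_len a b c u] at hp
      rw [h] at hle
      omega
    · exact h
  have hnext : ¬ (epos c u (j+1) ≤ p) := by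
    intro hcon
    have := Nat.findGreatest_is_greatest (Nat.lt_succ_self j) (by omega : j + 1 ≤ u.length)
    exact this hcon
  refine ⟨j, hjlt, ?_⟩
  rw [epos_succ] at hnext
  by_cases hc : u[j]? = some c
  · rw [if_pos hc] at hnext
    rcases Nat.lt_or_ge p (epos c u j + 1) with h | h
    · left; omega
    · right; exact ⟨hc, by omega⟩
  · rw [if_neg hc] at hnext
    left; omega

lemma count_eq_card_filter (c : α) (l : List α) :
    l.count c = ((Finset.range l.length).filter (fun j => l[j]? = some c)).card := by
  induction l with
  | nil => simp
  | cons x xs ih =>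
    rw [Finset.card_filter, List.length_cons, Finset.sum_range_succ']
    simp only [List.getElem?_cons_succ, List.getElem?_cons_zero]
    rw [← Finset.card_filter]
    by_cases hx : x = c <;> simp [List.count_cons, hx, ih] <;> omega


lemma isKPacking_empty [Nonempty α] (s : List α) (k : ℕ) :
    IsKPacking s k (fun _ => (∅ : Finset ℕ)) := by
  obtain ⟨a⟩ := (inferInstance : Nonempty α)
  exact ⟨fun i => ⟨by simp, by simp, a, a, by simp⟩, fun i j _ => by simp⟩

lemma sum_card_le_length {s : List α} {k : ℕ} {P : Fin k → Finset ℕ}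
    (h : IsKPacking s k P) : ∑ i, (P i).card ≤ s.length := by
  rw [← Finset.card_biUnion (fun i _ j _ hij => h.2 i j hij)]
  calc (Finset.univ.biUnion P).card ≤ (Finset.range s.length).card := by
        apply Finset.card_le_card
        intro x hx
        simp only [Finset.mem_biUnion] at hx
        obtain ⟨i, -, hxi⟩ := hx
        have := (h.1 i).1 x hxi
        simp; omega
    _ = s.length := Finset.card_range _

lemma pk_bddAbove (s : List α) (k : ℕ) :
    BddAbove {n : ℕ | ∃ P : Fin k → Finset ℕ, IsKPacking s k P ∧ n = ∑ i, (P i).card} := by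
  refine ⟨s.length, fun n hn => ?_⟩
  obtain ⟨P, hP, rfl⟩ := hn
  exact sum_card_le_length hP

lemma le_pk {s : List α} {k : ℕ} {P : Fin k → Finset ℕ} (hP : IsKPacking s k P) :
    ∑ i, (P i).card ≤ Pk s k :=
  le_csSup (pk_bddAbove s k) ⟨P, hP, rfl⟩

lemma pk_mem [Nonempty α] (s : List α) (k : ℕ) :
    ∃ P : Fin k → Finset ℕ, IsKPacking s k P ∧ Pk s k = ∑ i, (P i).card := by
  have h := Nat.sSup_mem (s := {n : ℕ | ∃ P : Fin k → Finset ℕ, IsKPacking s k P ∧ n = ∑ i, (P i).card})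
    ⟨0, (fun _ => ∅), isKPacking_empty s k, by simp⟩ (pk_bddAbove s k)
  exact h

lemma pk_pullback (a b c : α) (u : List α) (k : ℕ) {P : Fin k → Finset ℕ}
    (hP : IsKPacking u k P) :
    ∃ Q : Fin (k+1) → Finset ℕ, IsKPacking (expand a b c u) (k+1) Q ∧
      ∑ i, (Q i).card = u.count c + ∑ i, (P i).card := by
  classical
  set s := expand a b c u with hs
  have hslen : s.length = u.length + u.count c := expand_length a b c u
  set C0 : Finset ℕ := ((Finset.range u.length).filter (fun j => u[j]? = some c)).image (epos c u) with hC0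
  set f : ℕ → ℕ := fun j => epos c u (j+1) - 1 with hf
  have heposone : ∀ j : ℕ, 1 ≤ epos c u (j+1) := fun j => by
    have := epos_strictMono c u (Nat.succ_pos j); simp at this; omega
  have hfinj : Function.Injective f := by
    intro j₁ j₂ h
    simp only [hf] at h
    have h1 := heposone j₁
    have h2 := heposone j₂
    have : epos c u (j₁+1) = epos c u (j₂+1) := by omega
    have := (epos_strictMono c u).injective this
    omega
  set Q : Fin (k+1) → Finset ℕ := Fin.cons C0 (fun i => (P i).image f) with hQ
  -- facts about members of C0
  have hC0mem : ∀ p ∈ C0, ∃ j, j < u.length ∧ u[j]? = some c ∧ p = epos c u j := by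
    intro p hp
    simp only [hC0, Finset.mem_image, Finset.mem_filter, Finset.mem_range] at hp
    obtain ⟨j, ⟨hj, hjc⟩, rfl⟩ := hp
    exact ⟨j, hj, hjc, rfl⟩
  have hstep2 : ∀ j, u[j]? = some c → epos c u (j+1) = epos c u j + 2 := by
    intro j hj; rw [epos_succ, if_pos hj]
  have hstep1 : ∀ j, ¬(u[j]? = some c) → epos c u (j+1) = epos c u j + 1 := by
    intro j hj; rw [epos_succ, if_neg hj]
  have heposlen : ∀ {j}, j ≤ u.length → epos c u j ≤ s.length := by
    intro j hj
    rw [← epos_len a b c u]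
    exact (epos_strictMono c u).monotone hj
  have heposlt : ∀ {j}, j < u.length → epos c u j < s.length := fun hj => epos_lt_len a b c u hj
  -- C0 is a pair packing
  have hC0pack : IsPairPacking s C0 := by
    refine ⟨?_, ?_, a, b, ?_⟩
    · intro p hp
      obtain ⟨j, hj, hjc, rfl⟩ := hC0mem p hp
      have := heposlen (show j + 1 ≤ u.length by omega)
      have := hstep2 j hjc
      omega
    · intro p hp q hq hpq
      obtain ⟨j₁, hj₁, hjc₁, rfl⟩ := hC0mem p hp
      obtain ⟨j₂, hj₂, hjc₂, rfl⟩ := hC0mem q hq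
      have hne : j₁ ≠ j₂ := fun h => hpq (by rw [h])
      rcases Nat.lt_or_ge j₁ j₂ with h | h
      · have h2 := hstep2 j₁ hjc₁
        have := epos_add_le c u (show j₁ + 1 ≤ j₂ by omega)
        simp [Nat.dist]; omega
      · have h2 := hstep2 j₂ hjc₂
        have hlt : j₂ < j₁ := by omega
        have := epos_add_le c u (show j₂ + 1 ≤ j₁ by omega)
        simp [Nat.dist]; omega
    · intro p hp
      obtain ⟨j, hj, hjc, rfl⟩ := hC0mem p hp
      constructor
      · rw [hs, epos_getElem a b c u hj, if_pos hjc]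
      · rw [hs, epos_getElem_two a b c u hj hjc]
  -- transformed classes are pair packings
  have hCpack : ∀ i : Fin k, IsPairPacking s ((P i).image f) := by
    intro i
    obtain ⟨hval, hdist, ai, bi, hpair⟩ := hP.1 i
    refine ⟨?_, ?_, (if ai = c then b else ai), (if bi = c then a else bi), ?_⟩
    · intro p hp
      obtain ⟨j, hj, rfl⟩ := Finset.mem_image.mp hp
      have hv := hval j hj
      have h1 := heposone j
      have := heposlt (show j + 1 < u.length from hv)
      simp only [hf]
      omega
    · intro p hp q hq hpq
      obtain ⟨j₁, hj₁, rfl⟩ := Finset.mem_image.mp hp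
      obtain ⟨j₂, hj₂, rfl⟩ := Finset.mem_image.mp hq
      have hne : j₁ ≠ j₂ := fun h => hpq (by rw [h])
      have hd := hdist j₁ hj₁ j₂ hj₂ hne
      have h1 := heposone j₁
      have h2 := heposone j₂
      simp only [hf]
      rcases Nat.lt_or_ge j₁ j₂ with h | h
      · have := epos_add_le c u (show j₁ + 1 ≤ j₂ + 1 by omega)
        simp only [Nat.dist] at hd ⊢
        omega
      · have hlt : j₂ < j₁ := by simp only [Nat.dist] at hd; omega
        have := epos_add_le c u (show j₂ + 1 ≤ j₁ + 1 by omega)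
        simp only [Nat.dist] at hd ⊢
        omega
    · intro p hp
      obtain ⟨j, hj, rfl⟩ := Finset.mem_image.mp hp
      have hv := hval j hj
      have hjlt : j < u.length := by omega
      obtain ⟨hja, hjb⟩ := hpair j hj
      have h1 := heposone j
      have hpeq : f j + 1 = epos c u (j+1) := by simp only [hf]; omega
      constructor
      · by_cases hac : ai = c
        · have hjc : u[j]? = some c := by rw [hja, hac]
          have h2 := hstep2 j hjc
          have : f j = epos c u j + 1 := by simp only [hf]; omega
          rw [this, hs, epos_getElem_two a b c u hjlt hjc, if_pos hac]
        · have hjc : ¬(u[j]? = some c) := by rw [hja]; simpa using hac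
          have h2 := hstep1 j hjc
          have : f j = epos c u j := by simp only [hf]; omega
          rw [this, hs, epos_getElem a b c u hjlt, if_neg hjc, if_neg hac]
          congr 1
          have : u[j]? = some u[j] := List.getElem?_eq_getElem hjlt
          rw [this] at hja
          exact (Option.some_inj.mp hja)
      · rw [hpeq, hs, epos_getElem a b c u hv]
        by_cases hbc : bi = c
        · have hjc : u[j+1]? = some c := by rw [hjb, hbc]
          rw [if_pos hjc, if_pos hbc]
        · have hjc : ¬(u[j+1]? = some c) := by rw [hjb]; simpa using hbc
          rw [if_neg hjc, if_neg hbc]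
          congr 1
          have : u[j+1]? = some u[j+1] := List.getElem?_eq_getElem hv
          rw [this] at hjb
          exact (Option.some_inj.mp hjb)
  -- disjointness
  have hC0disj : ∀ i : Fin k, Disjoint C0 ((P i).image f) := by
    intro i
    rw [Finset.disjoint_left]
    intro p hp hp'
    obtain ⟨m, hm, hmc, rfl⟩ := hC0mem p hp
    obtain ⟨j, hj, hfj⟩ := Finset.mem_image.mp hp'
    have h1 := heposone j
    have heq : epos c u (j+1) = epos c u m + 1 := by simp only [hf] at hfj; omega
    rcases Nat.lt_or_ge (j+1) (m+1) with h | h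
    · have := (epos_strictMono c u).monotone (show j + 1 ≤ m by omega)
      omega
    · have h2 := hstep2 m hmc
      have := (epos_strictMono c u).monotone (show m + 1 ≤ j + 1 from h)
      omega
  have hQpack : IsKPacking s (k+1) Q := by
    constructor
    · intro i
      refine Fin.cases ?_ ?_ i
      · simpa [hQ] using hC0pack
      · intro i'; simpa [hQ] using hCpack i'
    · intro i j hij
      refine Fin.cases (motive := fun i => i ≠ j → Disjoint (Q i) (Q j)) ?_ ?_ i hij
      · refine Fin.cases (motive := fun j => (0 : Fin (k+1)) ≠ j → Disjoint (Q 0) (Q j)) ?_ ?_ j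
        · intro h; exact absurd rfl h
        · intro j' _
          simpa [hQ] using hC0disj j'
      · intro i'
        refine Fin.cases (motive := fun j => (Fin.succ i') ≠ j → Disjoint (Q i'.succ) (Q j)) ?_ ?_ j
        · intro h
          have := hC0disj i'
          simpa [hQ] using this.symm
        · intro j' hne
          have hij' : i' ≠ j' := by
            intro h; exact hne (by rw [h])
          simp only [hQ, Fin.cons_succ]
          rw [Finset.disjoint_left]
          intro p hp hp'
          obtain ⟨m₁, hm₁, hfm₁⟩ := Finset.mem_image.mp hp
          obtain ⟨m₂, hm₂, hfm₂⟩ := Finset.mem_image.mp hp'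
          have : m₁ = m₂ := hfinj (by rw [hfm₁, hfm₂])
          subst this
          exact Finset.disjoint_left.mp (hP.2 i' j' hij') hm₁ hm₂
  refine ⟨Q, hQpack, ?_⟩
  rw [hQ, Fin.sum_univ_succ]
  simp only [Fin.cons_zero, Fin.cons_succ]
  have hC0card : C0.card = u.count c := by
    rw [hC0, Finset.card_image_of_injective _ (epos_strictMono c u).injective,
      ← count_eq_card_filter]
  rw [hC0card]
  congr 1
  apply Finset.sum_congr rfl
  intro i _
  exact Finset.card_image_of_injective _ hfinj

lemma partialStep_len {s t : List α} (h : PartialStep s t) : t.length ≤ s.length := by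
  obtain ⟨a, b, c, rfl⟩ := h
  rw [expand_length]; omega

lemma partialReach_len : ∀ (k : ℕ) (s t : List α), PartialReach k s t → t.length ≤ s.length := by
  intro k
  induction k with
  | zero => intro s t h; rw [h]
  | succ k ih =>
    rintro s t ⟨u, hsu, hut⟩
    exact le_trans (ih u t hut) (partialStep_len hsu)

lemma partialReach_le_pk [Infinite α] :
    ∀ (k : ℕ) (s t : List α), PartialReach k s t → s.length - t.length ≤ Pk s k := by
  intro k
  induction k with
  | zero => intro s t h; rw [h]; simp
  | succ k ih =>
    rintro s t ⟨u, ⟨a, b, c, rfl⟩, hut⟩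
    have hlen : (expand a b c u).length = u.length + u.count c := expand_length a b c u
    have htu : t.length ≤ u.length := partialReach_len k u t hut
    have hIH : u.length - t.length ≤ Pk u k := ih u t hut
    obtain ⟨P, hP, hPk⟩ := pk_mem u k
    obtain ⟨Q, hQ, hQsum⟩ := pk_pullback a b c u k hP
    have h1 : u.count c + ∑ i, (P i).card ≤ Pk (expand a b c u) (k+1) := by
      rw [← hQsum]; exact le_pk hQ
    omega

lemma fullStep_expand {s t : List α} (h : FullStep s t) :
    ∃ a b c : α, c ∉ s ∧ expand a b c t = s := by
  obtain ⟨a, b, c, hc, rfl⟩ := h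
  exact ⟨a, b, c, hc, expand_replace a b c s hc⟩

lemma fullStep_len {s t : List α} (h : FullStep s t) : t.length ≤ s.length := by
  obtain ⟨a, b, c, hc, hexp⟩ := fullStep_expand h
  rw [← hexp, expand_length]; omega

lemma fullReach_len : ∀ (k : ℕ) (s t : List α), FullReach k s t → t.length ≤ s.length := by
  intro k
  induction k with
  | zero => intro s t h; rw [h]
  | succ k ih =>
    rintro s t ⟨u, hsu, hut⟩
    exact le_trans (ih u t hut) (fullStep_len hsu)

lemma fullStep_refl [Infinite α] (s : List α) : FullStep s s := by
  obtain ⟨c, hc⟩ := Infinite.exists_notMem_finset s.toFinset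
  have hc' : c ∉ s := fun h => hc (List.mem_toFinset.mpr h)
  exact ⟨c, c, c, hc', (replace_self c c s hc').symm⟩

lemma fullReach_refl [Infinite α] (k : ℕ) (s : List α) : FullReach k s s := by
  induction k with
  | zero => rfl
  | succ k ih => exact ⟨s, fullStep_refl s, ih⟩

lemma optm_bddAbove (s : List α) (k : ℕ) :
    BddAbove {u : ℕ | ∃ t : List α, FullReach k s t ∧ u = s.length - t.length} := by
  refine ⟨s.length, fun n hn => ?_⟩
  obtain ⟨t, -, rfl⟩ := hn
  exact Nat.sub_le _ _

lemma optm_mem [Infinite α] (s : List α) (k : ℕ) :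
    ∃ w : List α, FullReach k s w ∧ OPTm s k = s.length - w.length := by
  have hne : {u : ℕ | ∃ t : List α, FullReach k s t ∧ u = s.length - t.length}.Nonempty :=
    ⟨0, s, fullReach_refl k s, by simp⟩
  have h := Nat.sSup_mem hne (optm_bddAbove s k)
  obtain ⟨w, hw, hval⟩ := h
  exact ⟨w, hw, hval⟩

lemma optm_step [Infinite α] {s t : List α} {k : ℕ} (h : FullStep s t) :
    (s.length - t.length) + OPTm t k ≤ OPTm s (k+1) := by
  obtain ⟨w, hw, hval⟩ := optm_mem t k
  have h1 : w.length ≤ t.length := fullReach_len k t w hw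
  have h2 : t.length ≤ s.length := fullStep_len h
  have hmem : s.length - w.length ∈
      {u : ℕ | ∃ v : List α, FullReach (k+1) s v ∧ u = s.length - v.length} :=
    ⟨w, ⟨t, h, hw⟩, rfl⟩
  have h3 : s.length - w.length ≤ OPTm s (k+1) := le_csSup (optm_bddAbove s (k+1)) hmem
  rw [hval]
  omega

lemma pk_le_three_optm [Infinite α] : ∀ (k : ℕ) (s : List α), Pk s k ≤ 3 * OPTm s k := by
  intro k
  induction k with
  | zero =>
    intro s
    refine csSup_le' ?_
    rintro n ⟨P, hP, rfl⟩
    simp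
  | succ k ih =>
    intro s
    refine csSup_le' ?_
    rintro n ⟨P, hP, rfl⟩
    classical
    by_cases hne : ∃ i0 : Fin (k+1), (P i0).Nonempty
    · obtain ⟨i0, hne0⟩ := hne
      obtain ⟨aq, bq, hq⟩ := (hP.1 i0).2.2
      obtain ⟨c, hcf⟩ := Infinite.exists_notMem_finset s.toFinset
      have hc : c ∉ s := fun h => hcf (List.mem_toFinset.mpr h)
      set t := replace aq bq c s with ht
      have hexp : expand aq bq c t = s := expand_replace aq bq c s hc
      set g : ℕ := t.count c with hg
      have hslen : s.length = t.length + g := by rw [← hexp, expand_length]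
      -- survivor classes
      set surv : Fin (k+1) → Finset ℕ := fun i =>
        (Finset.range t.length).filter
          (fun j => epos c t j ∈ P i ∧ ¬(t[j]? = some c) ∧ ¬(t[j+1]? = some c) ∧ j+1 < t.length)
        with hsurv
      have hsurv_mem : ∀ (i : Fin (k+1)) (j : ℕ), j ∈ surv i ↔
          (j < t.length ∧ epos c t j ∈ P i ∧ ¬(t[j]? = some c) ∧ ¬(t[j+1]? = some c)
            ∧ j+1 < t.length) := by
        intro i j
        simp [hsurv, Finset.mem_filter, Finset.mem_range]
      -- survivors keep their pair
      have hsurv_pair : ∀ (i : Fin (k+1)) (A B : α),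
          (∀ p ∈ P i, s[p]? = some A ∧ s[p+1]? = some B) →
          ∀ j ∈ surv i, t[j]? = some A ∧ t[j+1]? = some B := by
        intro i A B hAB j hj
        obtain ⟨hjlen, hjP, hjc, hjc1, hj1len⟩ := (hsurv_mem i j).mp hj
        have h1 := epos_getElem aq bq c t hjlen
        rw [hexp, if_neg hjc] at h1
        have hA := (hAB _ hjP).1
        have htj : t[j]? = some t[j] := List.getElem?_eq_getElem hjlen
        have htjA : t[j] = A := by rw [h1] at hA; exact Option.some_inj.mp hA
        have hstep : epos c t (j+1) = epos c t j + 1 := by rw [epos_succ, if_neg hjc]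
        have h2 := epos_getElem aq bq c t hj1len
        rw [hexp] at h2
        rw [hstep, if_neg hjc1] at h2
        have hB := (hAB _ hjP).2
        have htj1 : t[j+1]? = some t[j+1] := List.getElem?_eq_getElem hj1len
        have htjB : t[j+1] = B := by rw [h2] at hB; exact Option.some_inj.mp hB
        exact ⟨by rw [htj, htjA], by rw [htj1, htjB]⟩
      -- the survivor classes form a k-packing of t (after removing class i0)
      have hsurv_pack : ∀ i : Fin (k+1), IsPairPacking t (surv i) := by
        intro i
        obtain ⟨hval, hdist, ai, bi, hpair⟩ := hP.1 i
        refine ⟨?_, ?_, ai, bi, hsurv_pair i ai bi hpair⟩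
        · intro j hj
          exact ((hsurv_mem i j).mp hj).2.2.2.2
        · intro j₁ hj₁ j₂ hj₂ hne12
          obtain ⟨h1len, h1P, h1c, -, -⟩ := (hsurv_mem i j₁).mp hj₁
          obtain ⟨h2len, h2P, h2c, -, -⟩ := (hsurv_mem i j₂).mp hj₂
          have hepne : epos c t j₁ ≠ epos c t j₂ := fun h => hne12 ((epos_strictMono c t).injective h)
          have hd := hdist _ h1P _ h2P hepne
          by_contra hcon
          have : Nat.dist j₁ j₂ ≤ 1 := by omega
          have habs : j₂ = j₁ + 1 ∨ j₁ = j₂ + 1 := by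
            simp only [Nat.dist] at this
            omega
          rcases habs with h | h
          · have : epos c t j₂ = epos c t j₁ + 1 := by rw [h, epos_succ, if_neg h1c]
            simp only [Nat.dist] at hd
            omega
          · have : epos c t j₁ = epos c t j₂ + 1 := by rw [h, epos_succ, if_neg h2c]
            simp only [Nat.dist] at hd
            omega
      have hsurv_disj : ∀ i₁ i₂ : Fin (k+1), i₁ ≠ i₂ → Disjoint (surv i₁) (surv i₂) := by
        intro i₁ i₂ hne12
        rw [Finset.disjoint_left]
        intro j hj₁ hj₂
        have h1 := ((hsurv_mem i₁ j).mp hj₁).2.1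
        have h2 := ((hsurv_mem i₂ j).mp hj₂).2.1
        exact Finset.disjoint_left.mp (hP.2 i₁ i₂ hne12) h1 h2
      have hP'pack : IsKPacking t k (fun i => surv (i0.succAbove i)) := by
        refine ⟨fun i => hsurv_pack _, fun i j hij => hsurv_disj _ _ ?_⟩
        intro h
        exact hij (Fin.succAbove_right_injective h)
      -- class i0 has no survivors
      have hsurv_i0 : surv i0 = ∅ := by
        rw [Finset.eq_empty_iff_forall_notMem]
        intro j hj
        have := hsurv_pair i0 aq bq hq j hj
        exact replace_noOcc aq bq c s hc j ⟨this.1, this.2⟩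
      -- lost elements and slots
      set lost : Fin (k+1) → Finset ℕ := fun i => P i \ ((surv i).image (epos c t)) with hlost
      set slots : Finset ℕ :=
        ((Finset.range t.length).filter (fun j => t[j]? = some c)).biUnion
          (fun j => ({epos c t j - 1, epos c t j, epos c t j + 1} : Finset ℕ)) with hslots
      have hlost_sub : ∀ i : Fin (k+1), lost i ⊆ slots := by
        intro i p hp
        rw [hlost] at hp
        obtain ⟨hpP, hpim⟩ := Finset.mem_sdiff.mp hp
        have hval := (hP.1 i).1 p hpP
        have hps : p < (expand aq bq c t).length := by rw [hexp]; omega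
        obtain ⟨j, hjlen, hcase⟩ := epos_cover aq bq c t hps
        have hmem_slot : ∀ j', j' < t.length → t[j']? = some c → ∀ x ∈ ({epos c t j' - 1, epos c t j', epos c t j' + 1} : Finset ℕ),
            x ∈ slots := by
          intro j' hj' hjc' x hx
          rw [hslots]
          rw [Finset.mem_biUnion]
          exact ⟨j', Finset.mem_filter.mpr ⟨Finset.mem_range.mpr hj', hjc'⟩, hx⟩
        rcases hcase with hpe | ⟨hjc, hpe⟩
        · by_cases hjc : t[j]? = some c
          · exact hmem_slot j hjlen hjc p (by simp [hpe])
          · have hj1len : j + 1 < t.length := by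
              by_contra hcon
              have hj1 : j + 1 = t.length := by omega
              have h1 : epos c t (j+1) = epos c t j + 1 := by rw [epos_succ, if_neg hjc]
              have h2 : epos c t (j+1) = s.length := by
                rw [hj1, epos_len aq bq c t, hexp]
              omega
            by_cases hjc1 : t[j+1]? = some c
            · have h1 : epos c t (j+1) = epos c t j + 1 := by rw [epos_succ, if_neg hjc]
              refine hmem_slot (j+1) hj1len hjc1 p ?_
              simp only [Finset.mem_insert, Finset.mem_singleton]
              left
              omega
            · exfalso
              apply hpim
              rw [Finset.mem_image]
              refine ⟨j, (hsurv_mem i j).mpr ⟨hjlen, by rw [← hpe]; exact hpP, hjc, hjc1, hj1len⟩, hpe.symm⟩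
        · exact hmem_slot j hjlen hjc p (by simp [hpe])
      have hslots_card : slots.card ≤ 3 * g := by
        have h3 : ∀ j : ℕ, ({epos c t j - 1, epos c t j, epos c t j + 1} : Finset ℕ).card ≤ 3 := by
          intro j
          refine (Finset.card_insert_le _ _).trans ?_
          exact Nat.succ_le_succ ((Finset.card_insert_le _ _).trans (by simp))
        calc slots.card
            ≤ ∑ j ∈ (Finset.range t.length).filter (fun j => t[j]? = some c),
                ({epos c t j - 1, epos c t j, epos c t j + 1} : Finset ℕ).card := Finset.card_biUnion_le
          _ ≤ ∑ j ∈ (Finset.range t.length).filter (fun j => t[j]? = some c), 3 :=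
              Finset.sum_le_sum (fun j _ => h3 j)
          _ = ((Finset.range t.length).filter (fun j => t[j]? = some c)).card * 3 := by
              rw [Finset.sum_const, smul_eq_mul]
          _ = 3 * g := by rw [hg, count_eq_card_filter]; ring
      have hlost_disj : ∀ i₁ ∈ Finset.univ, ∀ i₂ ∈ Finset.univ, i₁ ≠ i₂ →
          Disjoint (lost i₁) (lost i₂) := by
        intro i₁ _ i₂ _ hne12
        exact Finset.disjoint_of_subset_left (Finset.sdiff_subset)
          (Finset.disjoint_of_subset_right (Finset.sdiff_subset) (hP.2 i₁ i₂ hne12))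
      have hlost_sum : ∑ i, (lost i).card ≤ 3 * g := by
        rw [← Finset.card_biUnion hlost_disj]
        refine le_trans (Finset.card_le_card ?_) hslots_card
        intro x hx
        obtain ⟨i, -, hxi⟩ := Finset.mem_biUnion.mp hx
        exact hlost_sub i hxi
      have hcard_split : ∀ i : Fin (k+1), (P i).card ≤ (lost i).card + (surv i).card := by
        intro i
        have hsub : P i ⊆ lost i ∪ (surv i).image (epos c t) := by
          intro p hp
          rw [Finset.mem_union, hlost, Finset.mem_sdiff]
          by_cases h : p ∈ (surv i).image (epos c t)
          · right; exact h
          · left; exact ⟨hp, h⟩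
        calc (P i).card ≤ (lost i ∪ (surv i).image (epos c t)).card := Finset.card_le_card hsub
          _ ≤ (lost i).card + ((surv i).image (epos c t)).card := Finset.card_union_le _ _
          _ ≤ (lost i).card + (surv i).card := by
              exact Nat.add_le_add_left (Finset.card_image_le) _
      have hsum1 : ∑ i, (P i).card ≤ (∑ i, (lost i).card) + ∑ i, (surv i).card := by
        rw [← Finset.sum_add_distrib]
        exact Finset.sum_le_sum (fun i _ => hcard_split i)
      have hsurvsum : ∑ i : Fin (k+1), (surv i).card
          = (surv i0).card + ∑ i : Fin k, (surv (i0.succAbove i)).card :=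
        Fin.sum_univ_succAbove _ i0
      have hP'le : ∑ i : Fin k, (surv (i0.succAbove i)).card ≤ Pk t k := le_pk hP'pack
      have hih : Pk t k ≤ 3 * OPTm t k := ih t
      have hstep : FullStep s t := ⟨aq, bq, c, hc, ht⟩
      have hopt : (s.length - t.length) + OPTm t k ≤ OPTm s (k+1) := optm_step hstep
      have hg' : s.length - t.length = g := by omega
      rw [hsurv_i0, Finset.card_empty, zero_add] at hsurvsum
      rw [hg'] at hopt
      omega
    · push_neg at hne
      have hall : ∀ i, P i = ∅ := fun i => hne i
      simp [hall]

/-- the optimal partial pair-encoding utility is within a factor 3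
of the optimal full-merge utility: `OPT(s,k) ≤ 3 · OPT^m(s,k)`. -/
theorem stmt17 {α : Type*} [DecidableEq α] [Infinite α] (s : List α) (k : ℕ) :
    OPT s k ≤ 3 * OPTm s k := by
  refine csSup_le' ?_
  rintro n ⟨t, hr, rfl⟩
  exact le_trans (partialReach_le_pk k s t hr) (pk_le_three_optm k s)
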